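/- The following rewriting process terminates: given a finite sequence of positive roots (t_1,…,t_k) of a finite root system, repeatedly replace a consecutive pair (t_i, t_{i+1}) that is 'out of order' (with respect to a fixed linear order on the positive roots) either by merging equal entries or by the pair (t_{i+1}, t_i) followed by insertion of finitely many roots of the form i·t_i + j·t_{i+1} (i,j ≥ 1) that are positive roots (which have strictly larger height than both t_i and t_{i+1}). This process reaches a sorted sequence in finitely many steps. -/

import Mathlib

/-- A rewriting step on sequences of positive roots (the roots are indexed by `Fin N`, ordered
by the fixed linear order of `Fin N`): a consecutive out-of-order pair is either merged (if the
two entries are equal) or swapped, with insertion of the finite list `ins t t'` of roots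
`i·t + j·t'` (`i, j ≥ 1`) that are positive roots. -/
inductive RootRwStep (N : ℕ) (ins : Fin N → Fin N → List (Fin N)) :
    List (Fin N) → List (Fin N) → Prop
  | merge (a b : List (Fin N)) (t : Fin N) :
      RootRwStep N ins (a ++ t :: t :: b) (a ++ t :: b)
  | swap (a b : List (Fin N)) (t t' : Fin N) (h : t' < t) :
      RootRwStep N ins (a ++ t :: t' :: b) (a ++ t' :: t :: (ins t t' ++ b))

section RootRwAux

variable {N : ℕ}

/-- pairs (x, y) for y in l with y < x -/
private def pls (x : Fin N) (l : Multiset (Fin N)) : Multiset (Fin N × Fin N) :=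
  (l.filter (fun y => y < x)).map (fun y => (x, y))

private def inv : List (Fin N) → Multiset (Fin N × Fin N)
  | [] => 0
  | x :: xs => pls x ↑xs + inv xs

private def cross (a : List (Fin N)) (l : Multiset (Fin N)) : Multiset (Fin N × Fin N) :=
  (a.map (fun x => pls x l)).sum

@[simp] private lemma pls_zero (x : Fin N) : pls x 0 = 0 := rfl

private lemma pls_add (x : Fin N) (l₁ l₂ : Multiset (Fin N)) :
    pls x (l₁ + l₂) = pls x l₁ + pls x l₂ := by
  simp [pls, Multiset.filter_add]

private lemma pls_cons_pos {x y : Fin N} (l : Multiset (Fin N)) (h : y < x) :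
    pls x (y ::ₘ l) = (x, y) ::ₘ pls x l := by
  simp only [pls]
  rw [Multiset.filter_cons_of_pos (p := fun y => y < x) l h, Multiset.map_cons]

private lemma pls_cons_neg {x y : Fin N} (l : Multiset (Fin N)) (h : ¬ y < x) :
    pls x (y ::ₘ l) = pls x l := by
  simp only [pls]
  rw [Multiset.filter_cons_of_neg (p := fun y => y < x) l h]

private lemma mem_pls {x : Fin N} {l : Multiset (Fin N)} {p : Fin N × Fin N} (hp : p ∈ pls x l) :
    p.1 = x ∧ p.2 ∈ l := by
  simp only [pls, Multiset.mem_map, Multiset.mem_filter] at hp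
  obtain ⟨y, ⟨hy, _⟩, rfl⟩ := hp
  exact ⟨rfl, hy⟩

@[simp] private lemma cross_nil (l : Multiset (Fin N)) : cross [] l = 0 := rfl

private lemma cross_cons (x : Fin N) (a : List (Fin N)) (l : Multiset (Fin N)) :
    cross (x :: a) l = pls x l + cross a l := by
  simp [cross]

private lemma cross_add (a : List (Fin N)) (l₁ l₂ : Multiset (Fin N)) :
    cross a (l₁ + l₂) = cross a l₁ + cross a l₂ := by
  induction a with
  | nil => simp
  | cons x a ih => simp only [cross_cons, pls_add, ih]; abel

private lemma cross_cons_right (a : List (Fin N)) (y : Fin N) (l : Multiset (Fin N)) :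
    cross a (y ::ₘ l) = cross a {y} + cross a l := by
  rw [← Multiset.singleton_add, cross_add]

private lemma mem_cross {a : List (Fin N)} {l : Multiset (Fin N)} {p : Fin N × Fin N}
    (hp : p ∈ cross a l) : p.2 ∈ l := by
  induction a with
  | nil => simp [cross] at hp
  | cons x a ih =>
    rw [cross_cons, Multiset.mem_add] at hp
    rcases hp with hp | hp
    · exact (mem_pls hp).2
    · exact ih hp

private lemma mem_inv {l : List (Fin N)} {p : Fin N × Fin N} (hp : p ∈ inv l) :
    p.1 ∈ l ∧ p.2 ∈ l := by
  induction l with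
  | nil => simp [inv] at hp
  | cons x xs ih =>
    rw [inv, Multiset.mem_add] at hp
    rcases hp with hp | hp
    · obtain ⟨h1, h2⟩ := mem_pls hp
      exact ⟨by simp [h1], by simp [Multiset.mem_coe.mp h2]⟩
    · exact ⟨List.mem_cons_of_mem _ (ih hp).1, List.mem_cons_of_mem _ (ih hp).2⟩

private lemma inv_append (a b : List (Fin N)) :
    inv (a ++ b) = inv a + cross a ↑b + inv b := by
  induction a with
  | nil => simp [inv]
  | cons x a ih =>
    show pls x ↑(a ++ b) + inv (a ++ b) = (pls x ↑a + inv a) + cross (x :: a) ↑b + inv b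
    rw [← Multiset.coe_add, pls_add, ih, cross_cons]
    abel

private lemma inv_merge (a b : List (Fin N)) (t : Fin N) :
    inv (a ++ t :: t :: b) = inv (a ++ t :: b) + (cross a {t} + pls t ↑b) := by
  rw [inv_append, inv_append]
  simp only [inv, ← Multiset.cons_coe]
  rw [cross_cons_right a t (t ::ₘ ↑b), pls_cons_neg _ (lt_irrefl t)]
  abel

private lemma inv_swap (a b ins : List (Fin N)) (t t' : Fin N) (h : t' < t) :
    inv (a ++ t' :: t :: (ins ++ b)) + {(t, t')} =
      inv (a ++ t :: t' :: b) +
        (cross a ↑ins + pls t' ↑ins + pls t ↑ins + inv ins + cross ins ↑b) := by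
  rw [inv_append, inv_append]
  simp only [inv, ← Multiset.cons_coe]
  rw [inv_append, ← Multiset.coe_add,
    pls_cons_neg _ (not_lt_of_gt h), pls_cons_pos _ h,
    pls_add, pls_add, cross_cons_right a t', cross_cons_right a t,
    cross_cons_right a t (t' ::ₘ ↑b), cross_cons_right a t' ↑b, cross_add,
    ← Multiset.singleton_add (t, t') (pls t ↑b)]
  abel


private lemma mem_cross_fst {a : List (Fin N)} {l : Multiset (Fin N)} {p : Fin N × Fin N}
    (hp : p ∈ cross a l) : p.1 ∈ a := by
  induction a with
  | nil => simp [cross] at hp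
  | cons x a ih =>
    rw [cross_cons, Multiset.mem_add] at hp
    rcases hp with hp | hp
    · exact (mem_pls hp).1 ▸ (List.mem_cons_self : x ∈ x :: a)
    · exact List.mem_cons_of_mem _ (ih hp)

private lemma lex_lt_of_le {n : ℕ} {f g : Fin n → ℕ} (hle : ∀ j, f j ≤ g j) {i : Fin n}
    (hi : f i < g i) : toLex f < toLex g := by
  classical
  let s : Finset (Fin n) := Finset.univ.filter fun j => f j ≠ g j
  have hs : s.Nonempty := ⟨i, by simp [s, hi.ne]⟩
  refine ⟨s.min' hs, fun j hj => ?_, lt_of_le_of_ne (hle _) ?_⟩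
  · by_contra hne
    have hne' : f j ≠ g j := hne
    exact absurd (s.min'_le j (by simp [s, hne'])) (not_le_of_gt hj)
  · exact (Finset.mem_filter.mp (s.min'_mem hs)).2

end RootRwAux

private lemma step_cons {N : ℕ} {ins : Fin N → Fin N → List (Fin N)} (x : Fin N)
    {l₁ l₂ : List (Fin N)} (h : RootRwStep N ins l₁ l₂) :
    RootRwStep N ins (x :: l₁) (x :: l₂) := by
  cases h with
  | merge a b t => exact RootRwStep.merge (x :: a) b t
  | swap a b t t' h => exact RootRwStep.swap (x :: a) b t t' h


/-- Termination of the reordering process: if every root has positive height and every root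
inserted by a swap step has height strictly larger than the heights of both swapped roots, then
the rewriting process terminates (the step relation is well-founded), and any sequence to which
no step applies is sorted. -/
theorem rootRwStep_terminates (N : ℕ) (ht : Fin N → ℕ) (hht : ∀ t, 0 < ht t)
    (ins : Fin N → Fin N → List (Fin N))
    (hins : ∀ t t', ∀ s ∈ ins t t', ht t < ht s ∧ ht t' < ht s) :
    WellFounded (fun y x : List (Fin N) => RootRwStep N ins x y) ∧
    (∀ l : List (Fin N), (∀ y, ¬ RootRwStep N ins l y) → List.Chain' (· < ·) l) := by
  classical
  set K := Finset.univ.sup ht with hKdef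
  have hK : ∀ t, ht t ≤ K := fun t => Finset.le_sup (Finset.mem_univ t)
  set f : List (Fin N) → Fin (K + 2) → ℕ := fun l j =>
    if (j : ℕ) = K + 1 then l.length
    else (inv l).countP (fun p => max (ht p.1) (ht p.2) = (j : ℕ)) with hfdef
  have key : ∀ {x y : List (Fin N)}, RootRwStep N ins x y → toLex (f y) < toLex (f x) := by
    rintro x y (⟨a, b, t⟩ | ⟨a, b, t, t', h⟩)
    · -- merge
      have he := inv_merge a b t
      refine lex_lt_of_le (fun j => ?_) (i := Fin.last (K + 1)) ?_
      · show f (a ++ t :: b) j ≤ f (a ++ t :: t :: b) j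
        by_cases hj : (j : ℕ) = K + 1
        · simp only [hfdef, if_pos hj, List.length_append, List.length_cons]
          omega
        · simp only [hfdef, if_neg hj]
          rw [he, Multiset.countP_add]
          exact Nat.le_add_right _ _
      · show f (a ++ t :: b) (Fin.last (K + 1)) < f (a ++ t :: t :: b) (Fin.last (K + 1))
        have hlast : ((Fin.last (K + 1) : Fin (K + 2)) : ℕ) = K + 1 := rfl
        simp only [hfdef, if_pos hlast, List.length_append, List.length_cons]
        omega
    · -- swap
      set m := max (ht t) (ht t') with hm
      have hmK : m ≤ K := max_le (hK t) (hK t')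
      set D := cross a ↑(ins t t') + pls t' ↑(ins t t') + pls t ↑(ins t t') + inv (ins t t')
        + cross (ins t t') (↑b) with hD
      have he : inv (a ++ t' :: t :: (ins t t' ++ b)) + {(t, t')}
          = inv (a ++ t :: t' :: b) + D := inv_swap a b (ins t t') t t' h
      have hDbig : ∀ p ∈ D, m < max (ht p.1) (ht p.2) := by
        intro p hp
        have : (∃ s ∈ ins t t', p.1 = s) ∨ (∃ s ∈ ins t t', p.2 = s) := by
          rw [hD] at hp
          simp only [Multiset.mem_add] at hp
          rcases hp with ((((hp | hp) | hp) | hp) | hp)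
          · exact Or.inr ⟨p.2, Multiset.mem_coe.mp (mem_cross hp), rfl⟩
          · exact Or.inr ⟨p.2, Multiset.mem_coe.mp (mem_pls hp).2, rfl⟩
          · exact Or.inr ⟨p.2, Multiset.mem_coe.mp (mem_pls hp).2, rfl⟩
          · exact Or.inl ⟨p.1, (mem_inv hp).1, rfl⟩
          · exact Or.inl ⟨p.1, mem_cross_fst hp, rfl⟩
        rcases this with ⟨s, hs, hps⟩ | ⟨s, hs, hps⟩
        · calc m < ht s := max_lt_iff.mpr ⟨(hins t t' s hs).1, (hins t t' s hs).2⟩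
            _ ≤ _ := hps ▸ le_max_left _ _
        · calc m < ht s := max_lt_iff.mpr ⟨(hins t t' s hs).1, (hins t t' s hs).2⟩
            _ ≤ _ := hps ▸ le_max_right _ _
      have hcount : ∀ c : ℕ,
          Multiset.countP (fun p => max (ht p.1) (ht p.2) = c)
              (inv (a ++ t' :: t :: (ins t t' ++ b)))
            + (if m = c then 1 else 0)
          = Multiset.countP (fun p => max (ht p.1) (ht p.2) = c) (inv (a ++ t :: t' :: b))
            + Multiset.countP (fun p => max (ht p.1) (ht p.2) = c) D := by
        intro c
        have h2 := congrArg (Multiset.countP (fun p => max (ht p.1) (ht p.2) = c)) he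
        rw [Multiset.countP_add, Multiset.countP_add, ← Multiset.cons_zero,
          Multiset.countP_cons, Multiset.countP_zero, Nat.zero_add] at h2
        have h3 : (if max (ht (t, t').1) (ht (t, t').2) = c then 1 else 0)
            = (if m = c then 1 else 0) := rfl
        rwa [h3] at h2
      refine ⟨(⟨m, by omega⟩ : Fin (K + 2)), fun j hj => ?_, ?_⟩
      · have hjm : (j : ℕ) < m := hj
        have hjK : ¬ ((j : ℕ) = K + 1) := by omega
        show f (a ++ t' :: t :: (ins t t' ++ b)) j = f (a ++ t :: t' :: b) j
        simp only [hfdef, if_neg hjK]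
        have hzD : Multiset.countP (fun p => max (ht p.1) (ht p.2) = (j : ℕ)) D = 0 :=
          Multiset.countP_eq_zero.mpr (fun p hp hc => by have := hDbig p hp; omega)
        have h4 := hcount (j : ℕ)
        rw [hzD, if_neg (by omega)] at h4
        omega
      · have hiv : ((⟨m, by omega⟩ : Fin (K + 2)) : ℕ) = m := rfl
        have hiK : ¬ (((⟨m, by omega⟩ : Fin (K + 2)) : ℕ) = K + 1) := by rw [hiv]; omega
        show f (a ++ t' :: t :: (ins t t' ++ b)) _ < f (a ++ t :: t' :: b) _
        simp only [hfdef, if_neg hiK, hiv]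
        have hzD : Multiset.countP (fun p => max (ht p.1) (ht p.2) = m) D = 0 :=
          Multiset.countP_eq_zero.mpr (fun p hp hc => by have := hDbig p hp; omega)
        have h4 := hcount m
        rw [hzD, if_pos rfl] at h4
        omega
  constructor
  · exact Subrelation.wf (fun {y x} hstep => key hstep)
      (InvImage.wf (fun l => toLex (f l)) IsWellFounded.wf)
  · intro l hl
    induction l with
    | nil => exact List.isChain_nil
    | cons x xs ih =>
      cases xs with
      | nil => exact List.isChain_singleton x
      | cons y ys =>
        rw [List.Chain', List.isChain_cons_cons]
        constructor
        · rcases lt_trichotomy x y with hxy | rfl | hxy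
          · exact hxy
          · exact absurd (RootRwStep.merge [] ys x) (hl _)
          · exact absurd (RootRwStep.swap [] ys x y hxy) (hl _)
        · refine ih (fun z hz => ?_)
          exact hl _ (step_cons x hz)
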